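/- Let N ≥ 3 be an integer, let a > −(N−2)²/4 be real, and set β = √(1 + 4a/(N−2)²). Define w : (0,∞) → ℝ by w(r) = (N(N−2)β²)^{(N−2)/4} · (r^{β−1}/(1+r^{2β}))^{(N−2)/2}. Then w is positive and, for every r > 0, −w''(r) − ((N−1)/r)·w'(r) + (a/r²)·w(r) = w(r)^{(N+2)/(N−2)}; that is, the radial profile of the ground state W_a solves the radial equation 𝓛_a u = u^{(N+2)/(N−2)} with 𝓛_a = −Δ + a/|x|². -/

import Mathlib

noncomputable def gsBase (p q m x : ℝ) : ℝ := x ^ p * (1 + x ^ q) ^ (-m)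

lemma gsBase_hasDerivAt (p q m : ℝ) {r : ℝ} (hr : 0 < r) :
    HasDerivAt (gsBase p q m)
      (p * gsBase (p - 1) q m r + -(m * q) * gsBase (p + q - 1) q (m + 1) r) r := by
  have hD : (0 : ℝ) < 1 + r ^ q := by positivity
  have h1 : HasDerivAt (fun x : ℝ => x ^ p) (p * r ^ (p - 1)) r :=
    Real.hasDerivAt_rpow_const (Or.inl hr.ne')
  have h2 : HasDerivAt (fun x : ℝ => 1 + x ^ q) (q * r ^ (q - 1)) r :=
    (Real.hasDerivAt_rpow_const (Or.inl hr.ne')).const_add 1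
  have h3 := h2.rpow_const (p := -m) (Or.inl hD.ne')
  have h4 := h1.mul h3
  have e1 : r ^ (p + q - 1) = r ^ p * r ^ (q - 1) := by
    rw [← Real.rpow_add hr]; ring_nf
  have e2 : (1 + r ^ q) ^ (-(m + 1)) = (1 + r ^ q) ^ (-m - 1) := by ring_nf
  refine h4.congr_deriv ?_
  simp only [gsBase]
  rw [e1, e2]
  ring

/-- The radial profile of the ground state `W_a` is positive and solves the
radial equation `𝓛_a u = u^{(N+2)/(N-2)}` with `𝓛_a = -Δ + a/|x|²`. -/
theorem ground_state_solves_radial_equation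
    (N : ℕ) (hN : 3 ≤ N) (a : ℝ) (ha : -(((N : ℝ) - 2) ^ 2) / 4 < a)
    (β : ℝ) (hβ : β = Real.sqrt (1 + 4 * a / ((N : ℝ) - 2) ^ 2))
    (w : ℝ → ℝ)
    (hw : ∀ r : ℝ, w r =
      ((N : ℝ) * ((N : ℝ) - 2) * β ^ 2) ^ (((N : ℝ) - 2) / 4) *
        (r ^ (β - 1) / (1 + r ^ (2 * β))) ^ (((N : ℝ) - 2) / 2)) :
    ∀ r : ℝ, 0 < r →
      0 < w r ∧
      -(deriv (deriv w) r) - (((N : ℝ) - 1) / r) * deriv w r + (a / r ^ 2) * w r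
        = w r ^ (((N : ℝ) + 2) / ((N : ℝ) - 2)) := by
  set n : ℝ := (N : ℝ) with hn_def
  have hn : (3 : ℝ) ≤ n := by rw [hn_def]; exact_mod_cast hN
  have hn2 : (0 : ℝ) < n - 2 := by linarith
  have hn2' : n - 2 ≠ 0 := hn2.ne'
  have hnpos : (0 : ℝ) < n := by linarith
  have harg : (0 : ℝ) < 1 + 4 * a / (n - 2) ^ 2 := by
    have h4 : (0 : ℝ) < (n - 2) ^ 2 := by positivity
    have h5 : -1 < 4 * a / (n - 2) ^ 2 := by
      rw [lt_div_iff₀ h4]; nlinarith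
    linarith
  have hβpos : 0 < β := by rw [hβ]; exact Real.sqrt_pos.mpr harg
  have hβsq : β ^ 2 = 1 + 4 * a / (n - 2) ^ 2 := by
    rw [hβ, Real.sq_sqrt harg.le]
  set p : ℝ := (β - 1) * (n - 2) / 2 with hp_def
  set q : ℝ := 2 * β with hq_def
  set m : ℝ := (n - 2) / 2 with hm_def
  set K : ℝ := n * (n - 2) * β ^ 2 with hK_def
  set C : ℝ := K ^ ((n - 2) / 4) with hC_def
  have hKpos : 0 < K := by positivity
  have hCpos : 0 < C := Real.rpow_pos_of_pos hKpos _
  -- w = C * gsBase p q m on (0,∞)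
  have hweq : ∀ x : ℝ, 0 < x → w x = C * gsBase p q m x := by
    intro x hx
    rw [hw x]
    unfold gsBase
    have hx1 : (0 : ℝ) ≤ x ^ (β - 1) := (Real.rpow_pos_of_pos hx _).le
    have hx2 : (0 : ℝ) < 1 + x ^ (2 * β) := by positivity
    rw [Real.div_rpow hx1 hx2.le, div_eq_mul_inv, ← Real.rpow_neg hx2.le,
      ← Real.rpow_mul hx.le]
    rw [show (β - 1) * m = p by rw [hp_def, hm_def]; ring, ← hq_def]
  -- first derivative
  set w₁ : ℝ → ℝ := fun x => C * p * gsBase (p - 1) q m x +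
      C * -(m * q) * gsBase (p + q - 1) q (m + 1) x with hw1_def
  have hwderiv : ∀ r : ℝ, 0 < r → HasDerivAt w (w₁ r) r := by
    intro r hr
    have h := (gsBase_hasDerivAt p q m hr).const_mul C
    have heq : w =ᶠ[nhds r] fun x => C * gsBase p q m x := by
      filter_upwards [Ioi_mem_nhds hr] with x hx using hweq x hx
    have h2 := h.congr_of_eventuallyEq heq
    refine h2.congr_deriv ?_
    rw [hw1_def]; ring
  have hderiv1 : ∀ r : ℝ, 0 < r → deriv w r = w₁ r := fun r hr => (hwderiv r hr).deriv
  -- second derivative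
  set w₂ : ℝ → ℝ := fun r => C * p * ((p - 1) * gsBase (p - 2) q m r +
        -(m * q) * gsBase (p + q - 2) q (m + 1) r) +
      C * -(m * q) * ((p + q - 1) * gsBase (p + q - 2) q (m + 1) r +
        -((m + 1) * q) * gsBase (p + 2 * q - 2) q (m + 2) r) with hw2_def
  have hw1deriv : ∀ r : ℝ, 0 < r → HasDerivAt w₁ (w₂ r) r := by
    intro r hr
    have h1 := (gsBase_hasDerivAt (p - 1) q m hr).const_mul (C * p)
    have h2 := (gsBase_hasDerivAt (p + q - 1) q (m + 1) hr).const_mul (C * -(m * q))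
    have h := h1.add h2
    rw [show p - 1 - 1 = p - 2 by ring, show p - 1 + q - 1 = p + q - 2 by ring,
      show p + q - 1 - 1 = p + q - 2 by ring, show p + q - 1 + q - 1 = p + 2 * q - 2 by ring,
      show m + 1 + 1 = m + 2 by ring] at h
    exact h
  have hderiv2 : ∀ r : ℝ, 0 < r → deriv (deriv w) r = w₂ r := by
    intro r hr
    have heq : deriv w =ᶠ[nhds r] w₁ := by
      filter_upwards [Ioi_mem_nhds hr] with x hx using hderiv1 x hx
    rw [heq.deriv_eq]
    exact (hw1deriv r hr).deriv
  -- scalar identities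
  have hβ2' : (n - 2) ^ 2 * β ^ 2 = (n - 2) ^ 2 + 4 * a := by
    rw [hβsq]; field_simp
  have ha_eq : a = p ^ 2 + (n - 2) * p := by
    rw [hp_def]; linarith [hβ2']
  intro r hr
  have hs : (0 : ℝ) < r ^ q := Real.rpow_pos_of_pos hr q
  have hDp : (0 : ℝ) < 1 + r ^ q := by linarith
  constructor
  · rw [hweq r hr]
    exact mul_pos hCpos (mul_pos (Real.rpow_pos_of_pos hr p)
      (Real.rpow_pos_of_pos hDp (-m)))
  rw [hderiv2 r hr, hderiv1 r hr, hweq r hr]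
  simp only [hw1_def, hw2_def, gsBase]
  have hBpos : (0 : ℝ) < r ^ p := Real.rpow_pos_of_pos hr p
  have hGpos : (0 : ℝ) < (1 + r ^ q) ^ (-m) := Real.rpow_pos_of_pos hDp _
  have e_R : (C * (r ^ p * (1 + r ^ q) ^ (-m))) ^ ((n + 2) / (n - 2))
      = C * K * (r ^ (p - 2) * r ^ q) * (1 + r ^ q) ^ (-(m + 2)) := by
    rw [Real.mul_rpow hCpos.le (by positivity), Real.mul_rpow hBpos.le hGpos.le]
    have c1 : C ^ ((n + 2) / (n - 2)) = C * K := by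
      rw [hC_def, ← Real.rpow_mul hKpos.le,
        show (n - 2) / 4 * ((n + 2) / (n - 2)) = (n - 2) / 4 + 1 by field_simp; ring,
        Real.rpow_add hKpos, Real.rpow_one]
    have c2 : (r ^ p) ^ ((n + 2) / (n - 2)) = r ^ (p - 2) * r ^ q := by
      rw [← Real.rpow_mul hr.le,
        show p * ((n + 2) / (n - 2)) = p - 2 + q by rw [hp_def, hq_def]; field_simp; ring,
        Real.rpow_add hr]
    have c3 : ((1 + r ^ q) ^ (-m)) ^ ((n + 2) / (n - 2)) = (1 + r ^ q) ^ (-(m + 2)) := by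
      rw [← Real.rpow_mul hDp.le,
        show -m * ((n + 2) / (n - 2)) = -(m + 2) by rw [hm_def]; field_simp; ring]
    rw [c1, c2, c3]; ring
  rw [e_R]
  have e_pq1 : r ^ (p + q - 1) = r ^ (p - 2) * r * r ^ q := by
    rw [show p + q - 1 = p - 2 + 1 + q by ring, Real.rpow_add hr, Real.rpow_add hr,
      Real.rpow_one]
  have e_p2q : r ^ (p + 2 * q - 2) = r ^ (p - 2) * (r ^ q * r ^ q) := by
    rw [show p + 2 * q - 2 = p - 2 + (q + q) by ring, Real.rpow_add hr, Real.rpow_add hr]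
  have e_pq2 : r ^ (p + q - 2) = r ^ (p - 2) * r ^ q := by
    rw [show p + q - 2 = p - 2 + q by ring, Real.rpow_add hr]
  have e_p1 : r ^ (p - 1) = r ^ (p - 2) * r := by
    rw [show p - 1 = p - 2 + 1 by ring, Real.rpow_add hr, Real.rpow_one]
  have e_p : r ^ p = r ^ (p - 2) * (r * r) := by
    have h : r ^ (p - 2 + (1 + 1)) = r ^ (p - 2) * (r ^ (1:ℝ) * r ^ (1:ℝ)) := by
      rw [Real.rpow_add hr, Real.rpow_add hr]
    rw [Real.rpow_one] at h
    rw [← h]; congr 1; ring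
  have e_D : (1 + r ^ q) ^ (-m) = (1 + r ^ q) ^ (-(m + 2)) * ((1 + r ^ q) * (1 + r ^ q)) := by
    rw [show -m = -(m + 2) + (1 + 1) by ring, Real.rpow_add hDp, Real.rpow_add hDp,
      Real.rpow_one]
  have e_D1 : (1 + r ^ q) ^ (-(m + 1)) = (1 + r ^ q) ^ (-(m + 2)) * (1 + r ^ q) := by
    rw [show -(m + 1) = -(m + 2) + 1 by ring, Real.rpow_add hDp, Real.rpow_one]
  rw [ha_eq, e_pq1, e_p2q, e_pq2, e_p1, e_p, e_D, e_D1]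
  simp only [hp_def, hq_def, hm_def, hK_def]
  field_simp
  ring
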